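/- The number of orbits of R_n^B under the valley-hopping action equals the Bell number B_{n-1}; equivalently, ∑_{k=1}^{⌈n/2⌉} a_{n,k} = B_{n-1}, and each orbit of a permutation with k mruns has size 2^{n-k}. -/

import Mathlib

/-- `w` is a signed permutation of length n: a list of nonzero integers whose
absolute values form a permutation of {1,...,n}. -/
def IsSignedPerm (n : ℕ) (w : List ℤ) : Prop :=
  w.length = n ∧ (w.map Int.natAbs).Perm (List.range' 1 n)

/-- Position `i` is the bottom of a modular run (mrun) of `w`: either `i = 0`
or the previous entry is larger in absolute value. -/
def IsBottom (w : List ℤ) (i : ℕ) : Prop :=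
  i = 0 ∨ (w.getD i 0).natAbs < (w.getD (i - 1) 0).natAbs

instance (w : List ℤ) (i : ℕ) : Decidable (IsBottom w i) := by
  unfold IsBottom; infer_instance

/-- `w ∈ R_n^B`: `w` is a signed permutation of length n which is the flattening of a
type B merging-free partition without zero block; equivalently the bottoms of its
mruns are positive and increasing, and the absolute value of the top of each mrun
exceeds the bottom of the following mrun. -/
def MemR (n : ℕ) (w : List ℤ) : Prop :=
  IsSignedPerm n w ∧
  (∀ i, i < n → IsBottom w i → 0 < w.getD i 0) ∧
  (∀ i j, i < j → j < n → IsBottom w i → IsBottom w j → w.getD i 0 < w.getD j 0) ∧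
  (∀ j, 0 < j → j < n → IsBottom w j → w.getD j 0 < ((w.getD (j - 1) 0).natAbs : ℤ))

/-- The number of descents of `w`: positions i with `w_i > w_{i+1}`. -/
def des (w : List ℤ) : ℕ :=
  ((List.range (w.length - 1)).filter
    (fun i => decide (w.getD (i + 1) 0 < w.getD i 0))).length

/-- The major index of `w`: sum of the (1-based) descent positions. -/
def maj (w : List ℤ) : ℕ :=
  ∑ i ∈ Finset.range (w.length - 1),
    if w.getD (i + 1) 0 < w.getD i 0 then i + 1 else 0

/-- The number of modular runs (mruns) of `w`. -/
def numRuns (w : List ℤ) : ℕ :=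
  ((List.range w.length).filter (fun i => decide (IsBottom w i))).length

/-- `d n k`: the number of permutations in `R_n^B` having `k` descents. -/
noncomputable def dcount (n k : ℕ) : ℕ :=
  Nat.card {w : List ℤ // MemR n w ∧ des w = k}

/-- `τ` lies in the valley-hopping orbit of `σ`: same absolute values everywhere,
and the same (positive) entries at the bottoms of the mruns of `σ`. -/
def InOrb (σ τ : List ℤ) : Prop :=
  τ.length = σ.length ∧ ∀ i, i < σ.length →
    (τ.getD i 0).natAbs = (σ.getD i 0).natAbs ∧
    (IsBottom σ i → τ.getD i 0 = σ.getD i 0)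

/-- `a n k`: the number of run-sorted permutations of [n] having k runs. -/
def a : ℕ → ℕ → ℕ
  | 0, 0 => 1
  | 0, _ + 1 => 0
  | 1, 0 => 0
  | 1, 1 => 1
  | 1, _ + 2 => 0
  | _ + 2, 0 => 0
  | n + 2, k + 1 => (k + 1) * a (n + 1) (k + 1) + n * a n k

/-- The Bell numbers: `B_0 = 1`, `B_{m+1} = ∑_{j=0}^{m} C(m,j) B_j`. -/
def bell : ℕ → ℕ
  | 0 => 1
  | m + 1 => ∑ j ∈ (Finset.range (m + 1)).attach, Nat.choose m j.1 * bell j.1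
decreasing_by exact Finset.mem_range.mp j.2

lemma a_rec (n k : ℕ) : a (n+2) (k+1) = (k+1) * a (n+1) (k+1) + n * a n k := rfl
lemma a_zero : ∀ n, a (n+1) 0 = 0 := by rintro (_|n) <;> rfl
lemma a_vanish : ∀ n k, n + 1 < 2 * k → a n k = 0 := by
  intro n
  induction n using Nat.strong_induction_on with
  | _ n ih =>
    match n with
    | 0 =>
      intro k h
      match k with
      | k + 1 => rfl
    | 1 =>
      intro k h
      match k with
      | 0 => omega
      | 1 => omega
      | k + 2 => rfl
    | n + 2 =>
      intro k h
      match k with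
      | 0 => rfl
      | k + 1 =>
        rw [a_rec, ih (n+1) (by omega) (k+1) (by omega), ih n (by omega) k (by omega)]
        simp

lemma a_one (k : ℕ) : a 1 (k+2) = 0 := rfl
lemma a_two (k : ℕ) : a 2 (k+2) = 0 := by
  rw [show (2:ℕ) = 0+2 from rfl, a_rec]; simp [a_one]

lemma a_E : ∀ m k, ∑ t ∈ Finset.range (m - 1), Nat.choose m (t+2) * a (m - 1 - t) (k+1)
    = (k+1) * a (m+1) (k+2) := by
  intro m
  induction m using Nat.strong_induction_on with
  | _ m ih =>
    match m with
    | 0 => intro k; simp [a_one]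
    | 1 => intro k; simp [a_two]
    | m + 2 =>
      intro k
      have h1 : m + 2 - 1 = m + 1 := rfl
      simp only [h1]
      have hsplit : ∀ t, Nat.choose (m+2) (t+2) = Nat.choose (m+1) (t+1) + Nat.choose (m+1) (t+2) :=
        fun t => Nat.choose_succ_succ _ _
      simp only [hsplit, add_mul, Finset.sum_add_distrib]
      have ihm1 : ∑ t ∈ Finset.range m, Nat.choose (m+1) (t+2) * a (m-t) (k+1)
          = (k+1) * a (m+2) (k+2) := by
        have h := ih (m+1) (by omega) k
        simp only [Nat.add_sub_cancel] at h
        exact h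
      -- ihm1 : ∑ t ∈ range m, C(m+1,t+2) * a (m-t) (k+1) = (k+1) * a (m+2) (k+2)
      have hS2 : ∑ t ∈ Finset.range (m+1), Nat.choose (m+1) (t+1) * a (m+1-t) (k+1)
          = (k+1) * a (m+2) (k+2) + (m+1) * a (m+1) (k+1) := by
        rw [Finset.sum_range_succ']
        simp only [Nat.succ_sub_succ]
        rw [ihm1]
        simp [Nat.choose_one_right]
      have hinner : ∀ k', ∑ t ∈ Finset.range m, Nat.choose m (t+2) * a (m-1-t) k'
          = k' * a (m+1) (k'+1) := by
        intro k'
        match k' with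
        | 0 =>
          rw [zero_mul]
          refine Finset.sum_eq_zero fun t ht => ?_
          have ht' : t < m := Finset.mem_range.mp ht
          cases h : m - 1 - t with
          | zero => rw [Nat.choose_eq_zero_of_lt (by omega), zero_mul]
          | succ j => rw [a_zero, mul_zero]
        | k' + 1 =>
          match m with
          | 0 => simp [a_one]
          | m' + 1 =>
            rw [Finset.sum_range_succ, Nat.choose_eq_zero_of_lt (by omega), zero_mul, add_zero]
            have := ih (m'+1) (by omega) k'
            simp only [Nat.add_sub_cancel] at this ⊢
            exact this
      have hS1 : ∑ t ∈ Finset.range (m+1), Nat.choose (m+1) (t+2) * a (m+1-t) (k+1)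
          = (k+1) * ((k+1) * a (m+2) (k+2)) + (m+1) * (k * a (m+1) (k+1)) := by
        rw [Finset.sum_range_succ, Nat.choose_eq_zero_of_lt (by omega), zero_mul, add_zero]
        have hterm : ∀ t ∈ Finset.range m, Nat.choose (m+1) (t+2) * a (m+1-t) (k+1)
            = (k+1) * (Nat.choose (m+1) (t+2) * a (m-t) (k+1))
              + (m+1) * (Nat.choose m (t+2) * a (m-1-t) k) := by
          intro t ht
          have ht' : t < m := Finset.mem_range.mp ht
          have hc : Nat.choose (m+1) (t+2) * (m-1-t) = (m+1) * Nat.choose m (t+2) := by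
            have hh1 := Nat.choose_succ_right_eq (m+1) (t+2)
            have h3 : m + 1 - (t+2) = m - 1 - t := by omega
            rw [h3] at hh1
            have hh2 := Nat.add_one_mul_choose_eq m (t+2)
            exact (hh2.trans hh1).symm
          have e1 : m+1-t = (m-1-t)+2 := by omega
          have e2 : (m-1-t)+1 = m-t := by omega
          rw [e1, a_rec, e2, mul_add]
          congr 1
          · ring
          · rw [← mul_assoc, hc, mul_assoc]
        rw [Finset.sum_congr rfl hterm, Finset.sum_add_distrib, ← Finset.mul_sum, ← Finset.mul_sum,
          ihm1, hinner k]
      rw [hS2, hS1]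
      have h3 : a (m+2+1) (k+2) = (k+2) * a (m+2) (k+2) + (m+1) * a (m+1) (k+1) :=
        a_rec (m+1) (k+1)
      rw [h3]
      ring

lemma bell_succ (m : ℕ) : bell (m+1) = ∑ j ∈ Finset.range (m+1), Nat.choose m j * bell j := by
  rw [bell]; exact Finset.sum_attach (Finset.range (m+1)) (fun j => Nat.choose m j * bell j)

def T (m : ℕ) : ℕ := ∑ k ∈ Finset.range (m+1), a (m+1) (k+1)

lemma T_eq_bell : ∀ m, T m = bell m := by
  intro m
  induction m using Nat.strong_induction_on with
  | _ m ih =>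
    match m with
    | 0 => show a 1 1 * 1 = bell 0 ; rw [bell] ; rfl
    | 1 =>
      show T 1 = bell 1
      rw [bell_succ, Finset.sum_range_one, T, Finset.sum_range_succ, Finset.sum_range_one]
      rw [bell]
      norm_num
      rw [show a 2 1 = 1 from by rw [show (2:ℕ) = 0+2 from rfl, a_rec]; rfl,
        show a 2 2 = 0 from by rw [show (2:ℕ) = 0+2 from rfl, a_rec]; rfl]
    | m + 2 =>
      have hA : ∑ k ∈ Finset.range (m+3), a (m+2) (k+1) = T (m+1) := by
        rw [Finset.sum_range_succ, a_vanish (m+2) (m+3) (by omega), add_zero]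
        rfl
      have hC : ∑ k ∈ Finset.range (m+3), a (m+1) k = T m := by
        rw [Finset.sum_range_succ', a_zero, add_zero, Finset.sum_range_succ,
          a_vanish (m+1) (m+2) (by omega), add_zero]
        rfl
      have hB : ∑ k ∈ Finset.range (m+3), k * a (m+2) (k+1)
          = ∑ t ∈ Finset.range m, Nat.choose (m+1) (t+2) * T (m-1-t) := by
        rw [Finset.sum_range_succ', zero_mul, add_zero]
        have he : ∀ k ∈ Finset.range (m+2), (k+1) * a (m+2) (k+1+1)
            = ∑ t ∈ Finset.range m, Nat.choose (m+1) (t+2) * a (m-t) (k+1) := by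
          intro k _
          have h := a_E (m+1) k
          simp only [Nat.add_sub_cancel] at h
          exact h.symm
        rw [Finset.sum_congr rfl he, Finset.sum_comm]
        refine Finset.sum_congr rfl fun t ht => ?_
        have ht' : t < m := Finset.mem_range.mp ht
        rw [← Finset.mul_sum]
        congr 1
        have hT : T (m-1-t) = ∑ k ∈ Finset.range (m-t), a (m-t) (k+1) := by
          have e : m-1-t+1 = m-t := by omega
          rw [T, e]
        rw [hT]
        refine (Finset.sum_subset (Finset.range_subset_range.mpr (by omega)) fun k hk hk' => ?_).symm
        refine a_vanish _ _ ?_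
        simp only [Finset.mem_range] at hk hk'
        omega
      calc T (m+2) = ∑ k ∈ Finset.range (m+3), a (m+3) (k+1) := rfl
        _ = ∑ k ∈ Finset.range (m+3), ((k+1) * a (m+2) (k+1) + (m+1) * a (m+1) k) := by
              refine Finset.sum_congr rfl fun k _ => ?_
              exact a_rec (m+1) k
        _ = ((∑ k ∈ Finset.range (m+3), k * a (m+2) (k+1))
              + (∑ k ∈ Finset.range (m+3), a (m+2) (k+1)))
              + (m+1) * ∑ k ∈ Finset.range (m+3), a (m+1) k := by
              simp only [add_mul, one_mul, Finset.sum_add_distrib, Finset.mul_sum]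
        _ = ((∑ t ∈ Finset.range m, Nat.choose (m+1) (t+2) * T (m-1-t)) + T (m+1))
              + (m+1) * T m := by rw [hA, hB, hC]
        _ = ((∑ j ∈ Finset.range m, Nat.choose (m+1) j * bell j) + bell (m+1))
              + (m+1) * bell m := by
              rw [ih (m+1) (by omega), ih m (by omega)]
              congr 1
              congr 1
              have hcoef : ∀ t ∈ Finset.range m, Nat.choose (m+1) (t+2) * T (m-1-t)
                  = Nat.choose (m+1) (m-1-t) * bell (m-1-t) := by
                intro t ht
                have ht' : t < m := Finset.mem_range.mp ht
                rw [ih (m-1-t) (by omega)]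
                congr 1
                rw [← Nat.choose_symm (show t+2 ≤ m+1 by omega)]
                congr 1
                omega
              rw [Finset.sum_congr rfl hcoef]
              exact Finset.sum_range_reflect (fun j => Nat.choose (m+1) j * bell j) m
        _ = bell (m+2) := by
              rw [bell_succ (m+1), Finset.sum_range_succ, Finset.sum_range_succ,
                Nat.choose_succ_self_right, Nat.choose_self]
              ring

/-- The list obtained from σ by assigning sign f i at non-bottom positions. -/
def mkList (σ : List ℤ) (n : ℕ) (f : ℕ → Bool) : List ℤ :=
  (List.range n).map (fun i => if IsBottom σ i then σ.getD i 0
    else if f i then ((σ.getD i 0).natAbs : ℤ) else -((σ.getD i 0).natAbs : ℤ))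

lemma mkList_length (σ : List ℤ) (n : ℕ) (f : ℕ → Bool) : (mkList σ n f).length = n := by
  simp [mkList]

lemma mkList_getD (σ : List ℤ) (n : ℕ) (f : ℕ → Bool) (i : ℕ) (hi : i < n) :
    (mkList σ n f).getD i 0 = if IsBottom σ i then σ.getD i 0
      else if f i then ((σ.getD i 0).natAbs : ℤ) else -((σ.getD i 0).natAbs : ℤ) := by
  rw [List.getD_eq_getElem _ _ (by simp [mkList_length, hi] : i < (mkList σ n f).length)]
  simp [mkList]

lemma part2 (n : ℕ) (σ : List ℤ) (h : MemR n σ) :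
    Nat.card {τ : List ℤ // InOrb σ τ} = 2 ^ (n - numRuns σ) := by
  obtain ⟨⟨hL, hperm⟩, -, -, -⟩ := h
  have hpos : ∀ i, i < n → 1 ≤ (σ.getD i 0).natAbs := by
    intro i hi
    have hi' : i < σ.length := by omega
    rw [List.getD_eq_getElem _ _ hi']
    have hmem : σ[i].natAbs ∈ σ.map Int.natAbs := List.mem_map_of_mem (σ.getElem_mem hi')
    have := hperm.mem_iff.mp hmem
    rw [List.mem_range'] at this
    obtain ⟨j, hj, hj2⟩ := this
    omega
  classical
  set Bset : Finset ℕ := (Finset.range n).filter (fun i => ¬ IsBottom σ i) with hBset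
  -- the key bijection
  have hbij : Nat.card {τ : List ℤ // InOrb σ τ} = Nat.card (Bset → Bool) := by
    refine Nat.card_eq_of_bijective (fun τ => fun i => decide (0 < τ.1.getD i.1 0)) ⟨?_, ?_⟩
    · rintro ⟨τ₁, hτ₁⟩ ⟨τ₂, hτ₂⟩ hff
      have hgetD : ∀ i, i < n → τ₁.getD i 0 = τ₂.getD i 0 := by
        intro i hi
        have hi' : i < σ.length := by omega
        obtain ⟨ha1, hb1⟩ := hτ₁.2 i hi'
        obtain ⟨ha2, hb2⟩ := hτ₂.2 i hi'
        by_cases hbot : IsBottom σ i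
        · rw [hb1 hbot, hb2 hbot]
        · have hmem : i ∈ Bset := by
            rw [hBset]; simp only [Finset.mem_filter, Finset.mem_range]; exact ⟨hi, hbot⟩
          have := congrFun hff ⟨i, hmem⟩
          simp only [decide_eq_decide] at this
          have hnz := hpos i hi
          omega
      ext1
      apply List.ext_getElem (by rw [hτ₁.1, hτ₂.1])
      intro i h1 h2
      have hi : i < n := by rw [hτ₁.1, hL] at h1; exact h1
      have := hgetD i hi
      rwa [List.getD_eq_getElem _ _ h1, List.getD_eq_getElem _ _ h2] at this
    · intro g
      refine ⟨⟨mkList σ n (fun i => if h : i ∈ Bset then g ⟨i, h⟩ else true), ?_, ?_⟩, ?_⟩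
      · rw [mkList_length, hL]
      · intro i hi
        have hi' : i < n := by omega
        rw [mkList_getD σ n _ i hi']
        by_cases hbot : IsBottom σ i
        · rw [if_pos hbot]; exact ⟨rfl, fun _ => rfl⟩
        · rw [if_neg hbot]
          refine ⟨?_, fun hb => absurd hb hbot⟩
          by_cases hg : (if h : i ∈ Bset then g ⟨i, h⟩ else true) = true
          · rw [if_pos hg]; simp [Int.natAbs_abs]
          · rw [if_neg hg]; simp [Int.natAbs_abs]
      · funext i
        obtain ⟨i, hmem⟩ := i
        have hi : i < n ∧ ¬ IsBottom σ i := by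
          have := hmem; rw [hBset] at this
          simpa only [Finset.mem_filter, Finset.mem_range] using this
        simp only
        rw [mkList_getD σ n _ i hi.1, if_neg hi.2, dif_pos hmem]
        have hnz := hpos i hi.1
        cases hg : g ⟨i, hmem⟩
        · rw [if_neg (by simp [hg])]
          simp only [decide_eq_false_iff_not, not_lt]
          omega
        · rw [if_pos (by simp [hg])]
          simp only [decide_eq_true_eq]
          omega
  rw [hbij, Nat.card_eq_fintype_card, Fintype.card_fun, Fintype.card_bool, Fintype.card_coe]
  congr 1
  have hcard : (Finset.filter (fun i => IsBottom σ i) (Finset.range n)).card = numRuns σ := by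
    rw [numRuns, hL]
    rfl
  rw [hBset, Finset.filter_not, Finset.card_sdiff_of_subset (Finset.filter_subset _ _), Finset.card_range,
    hcard]

lemma sum_Icc_shift (f : ℕ → ℕ) : ∀ n, ∑ k ∈ Finset.Icc 1 n, f k = ∑ k ∈ Finset.range n, f (k+1)
  | 0 => by simp
  | n+1 => by
    rw [Finset.sum_Icc_succ_top (by omega), sum_Icc_shift f n, Finset.sum_range_succ]

/-- The number of orbits of `R_n^B` under valley-hopping is the Bell number `B_{n-1}`;
equivalently `∑_{k=1}^{⌈n/2⌉} a_{n,k} = B_{n-1}`, and the orbit of a permutation with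
`k` mruns has size `2^{n-k}`. -/
theorem orbit_count_bell (n : ℕ) (hn : 1 ≤ n) :
    (∑ k ∈ Finset.Icc 1 ((n + 1) / 2), a n k) = bell (n - 1) ∧
    (∀ σ, MemR n σ →
      Nat.card {τ : List ℤ // InOrb σ τ} = 2 ^ (n - numRuns σ)) := by
  constructor
  · obtain ⟨m, rfl⟩ : ∃ m, n = m + 1 := ⟨n - 1, by omega⟩
    have h2 : ∑ k ∈ Finset.Icc 1 ((m+1+1)/2), a (m+1) k
        = ∑ k ∈ Finset.Icc 1 (m+1), a (m+1) k := by
      refine Finset.sum_subset (Finset.Icc_subset_Icc_right (by omega)) fun k hk hk' => ?_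
      simp only [Finset.mem_Icc] at hk hk'
      exact a_vanish _ _ (by omega)
    rw [h2, sum_Icc_shift]
    exact T_eq_bell m
  · intro σ hσ
    exact part2 n σ hσ
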